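/- Let O be a discrete valuation ring with fraction field F, V a finite-dimensional F-vector space with a nondegenerate symmetric F-bilinear form, and for a full O-lattice L ⊆ V let L∨ = {v ∈ V : (v, L) ⊆ O} denote its dual lattice. If L ⊆ M are full O-lattices in V with M ⊆ M∨ ⊆ L∨, then 2 · length_O(M/L) = length_O(L∨/L) − length_O(M∨/M). -/

import Mathlib

open Order

section IccAdd

variable {α : Type*} [Lattice α] [IsModularLattice α]

lemma ltseries_split {a b c : α} (hab : a ≤ b) (hbc : b ≤ c) :
    ∀ (n : ℕ) (q : LTSeries (Set.Icc a c)), q.length = n →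
    ∃ (s : LTSeries (Set.Icc a b)) (t : LTSeries (Set.Icc b c)),
      ((s.last : α) = (q.last : α) ⊓ b) ∧ ((t.last : α) = (q.last : α) ⊔ b) ∧
        n ≤ s.length + t.length := by
  intro n
  induction n with
  | zero =>
    intro q _
    refine ⟨RelSeries.singleton _ ⟨(q.last : α) ⊓ b, ?_⟩,
      RelSeries.singleton _ ⟨(q.last : α) ⊔ b, ?_⟩, rfl, rfl, by simp⟩
    · exact ⟨le_inf q.last.2.1 hab, inf_le_right⟩
    · exact ⟨le_sup_right, sup_le q.last.2.2 hbc⟩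
  | succ n ih =>
    intro q hq
    obtain ⟨s, t, hs, ht, hlen⟩ := ih q.eraseLast (by simp [hq])
    have hzy : (q.eraseLast.last : α) < (q.last : α) := by
      exact_mod_cast q.eraseLast_last_rel_last (by omega)
    set z : α := (q.eraseLast.last : α)
    set y : α := (q.last : α)
    by_cases h1 : y ⊓ b ≤ z ⊓ b
    · -- inf equal, sup strict
      have hsup : z ⊔ b < y ⊔ b := sup_lt_sup_of_lt_of_inf_le_inf hzy h1
      have hinf : z ⊓ b = y ⊓ b := le_antisymm (inf_le_inf_right b hzy.le) h1
      refine ⟨s, t.snoc ⟨y ⊔ b, le_sup_right, sup_le q.last.2.2 hbc⟩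
        (by change (t.last : α) < y ⊔ b; rw [ht]; exact hsup), ?_, ?_, ?_⟩
      · rw [hs, hinf]
      · simp [RelSeries.last_snoc]
      · simp only [RelSeries.snoc_length]; omega
    · have hinf : z ⊓ b < y ⊓ b :=
        lt_of_le_of_ne (inf_le_inf_right b hzy.le) (fun e => h1 e.ge)
      by_cases h2 : y ⊔ b ≤ z ⊔ b
      · have hsup : z ⊔ b = y ⊔ b := le_antisymm (sup_le_sup_right hzy.le b) h2
        refine ⟨s.snoc ⟨y ⊓ b, le_inf q.last.2.1 hab, inf_le_right⟩
          (by change (s.last : α) < y ⊓ b; rw [hs]; exact hinf), t, ?_, ?_, ?_⟩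
        · simp [RelSeries.last_snoc]
        · rw [ht, hsup]
        · simp only [RelSeries.snoc_length]; omega
      · have hsup : z ⊔ b < y ⊔ b :=
          lt_of_le_of_ne (sup_le_sup_right hzy.le b) (fun e => h2 e.ge)
        refine ⟨s.snoc ⟨y ⊓ b, le_inf q.last.2.1 hab, inf_le_right⟩
          (by change (s.last : α) < y ⊓ b; rw [hs]; exact hinf),
          t.snoc ⟨y ⊔ b, le_sup_right, sup_le q.last.2.2 hbc⟩
          (by change (t.last : α) < y ⊔ b; rw [ht]; exact hsup), ?_, ?_, ?_⟩
        · simp [RelSeries.last_snoc]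
        · simp [RelSeries.last_snoc]
        · simp only [RelSeries.snoc_length]; omega

lemma ltseries_join {a b c : α} (hab : a ≤ b) (hbc : b ≤ c)
    (s : LTSeries (Set.Icc a b)) (t : LTSeries (Set.Icc b c)) :
    ∃ q : LTSeries (Set.Icc a c), s.length + t.length ≤ q.length := by
  have hfm : StrictMono (fun x : Set.Icc a b => (⟨x.1, x.2.1, x.2.2.trans hbc⟩ : Set.Icc a c)) :=
    fun x y h => by rwa [← Subtype.coe_lt_coe] at h ⊢
  have hgm : StrictMono (fun x : Set.Icc b c => (⟨x.1, hab.trans x.2.1, x.2.2⟩ : Set.Icc a c)) :=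
    fun x y h => by rwa [← Subtype.coe_lt_coe] at h ⊢
  set bE : Set.Icc a c := ⟨b, hab, hbc⟩
  set s₁ : LTSeries (Set.Icc a c) := s.map _ hfm
  set t₁ : LTSeries (Set.Icc a c) := t.map _ hgm
  have hs₁ : (s₁.last : α) ≤ b := by
    rw [LTSeries.last_map s _ hfm]; exact s.last.2.2
  have ht₁ : b ≤ (t₁.head : α) := by
    rw [LTSeries.head_map t _ hgm]; exact t.head.2.1
  obtain ⟨s₂, hs₂last, hs₂len⟩ : ∃ s₂ : LTSeries (Set.Icc a c),
      s₂.last = bE ∧ s.length ≤ s₂.length := by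
    by_cases h : s₁.last = bE
    · exact ⟨s₁, h, by simp [s₁]⟩
    · exact ⟨s₁.snoc bE (show s₁.last < bE from lt_of_le_of_ne (by exact_mod_cast hs₁) h), by simp,
        by simp [s₁]⟩
  obtain ⟨t₂, ht₂head, ht₂len⟩ : ∃ t₂ : LTSeries (Set.Icc a c),
      t₂.head = bE ∧ t.length ≤ t₂.length := by
    by_cases h : t₁.head = bE
    · exact ⟨t₁, h, by simp [t₁]⟩
    · exact ⟨t₁.cons bE (show bE < t₁.head from lt_of_le_of_ne (by exact_mod_cast ht₁) (fun e => h e.symm)), by simp,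
        by simp [t₁]⟩
  refine ⟨s₂.smash t₂ (by rw [hs₂last, ht₂head]), ?_⟩
  rw [RelSeries.smash_length]
  omega

lemma krullDim_Icc_add {a b c : α} (hab : a ≤ b) (hbc : b ≤ c) :
    krullDim (Set.Icc a c) = krullDim (Set.Icc a b) + krullDim (Set.Icc b c) := by
  have : Nonempty (Set.Icc a b) := ⟨⟨a, le_rfl, hab⟩⟩
  have : Nonempty (Set.Icc b c) := ⟨⟨b, le_rfl, hbc⟩⟩
  have : Nonempty (Set.Icc a c) := ⟨⟨a, le_rfl, hab.trans hbc⟩⟩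
  rw [krullDim_eq_iSup_length (α := Set.Icc a c), krullDim_eq_iSup_length (α := Set.Icc a b),
    krullDim_eq_iSup_length (α := Set.Icc b c), ← WithBot.coe_add, WithBot.coe_inj]
  apply le_antisymm
  · apply iSup_le
    intro q
    obtain ⟨s, t, -, -, hlen⟩ := ltseries_split hab hbc q.length q rfl
    calc (q.length : ℕ∞) ≤ (s.length : ℕ∞) + t.length := by exact_mod_cast hlen
      _ ≤ _ := add_le_add (le_iSup (fun p : LTSeries (Set.Icc a b) => (p.length : ℕ∞)) s)
          (le_iSup (fun p : LTSeries (Set.Icc b c) => (p.length : ℕ∞)) t)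
  · apply ENat.iSup_add_iSup_le
    intro s t
    obtain ⟨q, hq⟩ := ltseries_join hab hbc s t
    calc (s.length : ℕ∞) + t.length ≤ (q.length : ℕ∞) := by exact_mod_cast hq
      _ ≤ _ := le_iSup (fun p : LTSeries (Set.Icc a c) => (p.length : ℕ∞)) q

end IccAdd
open Order

section QuotIcc

variable {R M : Type*} [Ring R] [AddCommGroup M] [Module R M]

/-- The lattice of submodules of `N ⧸ L` is isomorphic to the interval `[L, N]`. -/
noncomputable def quotIccOrderIso (L N : Submodule R M) (h : L ≤ N) :
    Submodule R (↥N ⧸ (L.comap N.subtype)) ≃o Set.Icc L N := by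
  refine OrderIso.trans (Submodule.comapMkQRelIso (L.comap N.subtype)) ?_
  refine { toFun := fun q => ⟨Submodule.map N.subtype q.1, ?_, Submodule.map_subtype_le _ _⟩
           invFun := fun x => ⟨Submodule.comap N.subtype x.1, ?_⟩
           left_inv := ?_, right_inv := ?_, map_rel_iff' := ?_ }
  · -- L ≤ map subtype q
    have : Submodule.map N.subtype (L.comap N.subtype) ≤ Submodule.map N.subtype q.1 :=
      Submodule.map_mono q.2
    rwa [Submodule.map_comap_subtype, inf_eq_right.mpr h] at this
  · -- comap subtype L ≤ comap subtype x
    exact Submodule.comap_mono x.2.1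
  · rintro ⟨q, hq⟩
    ext1
    simp only
    rw [Submodule.comap_map_eq_of_injective (Submodule.injective_subtype N)]
  · rintro ⟨x, hL, hN⟩
    ext1
    simp only
    rw [Submodule.map_comap_subtype, inf_eq_right.mpr hN]
  · rintro ⟨q, hq⟩ ⟨q', hq'⟩
    simp only [Equiv.coe_fn_mk, Subtype.mk_le_mk]
    constructor
    · intro hm
      have := Submodule.comap_mono (f := N.subtype) hm
      rwa [Submodule.comap_map_eq_of_injective (Submodule.injective_subtype N),
        Submodule.comap_map_eq_of_injective (Submodule.injective_subtype N)] at this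
    · exact fun hm => Submodule.map_mono hm

lemma moduleLength_quot_eq_krullDim_Icc (L N : Submodule R M) (h : L ≤ N) :
    Order.krullDim (Submodule R (↥N ⧸ (L.comap N.subtype))) = Order.krullDim (Set.Icc L N) :=
  Order.krullDim_eq_of_orderIso (quotIccOrderIso L N h)

end QuotIcc
open LinearMap (BilinForm)

section Dual

variable {O F V : Type*} [CommRing O] [IsDomain O] [IsDiscreteValuationRing O]
    [Field F] [Algebra O F] [IsFractionRing O F]
    [AddCommGroup V] [Module F V] [FiniteDimensional F V]
    [Module O V] [IsScalarTower O F V]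

lemma exists_basis_of_fg_full (x : Submodule O V) (hfg : x.FG)
    (hspan : Submodule.span F (x : Set V) = ⊤) :
    ∃ (n : ℕ) (b : Module.Basis (Fin n) F V), Submodule.span O (Set.range ⇑b) = x := by
  haveI : Module.Finite O x := Module.Finite.iff_fg.mpr hfg
  haveI : NoZeroSMulDivisors O V := by
    refine ⟨fun {a v} h => ?_⟩
    by_cases ha : a = 0
    · exact Or.inl ha
    · right
      have : (algebraMap O F a) • v = 0 := by rwa [algebraMap_smul]
      rcases smul_eq_zero.mp this with h | h
      · exact absurd ((injective_iff_map_eq_zero _).mp (IsFractionRing.injective O F) a h) ha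
      · exact h
  haveI : Module.Free O x := Module.free_of_finite_type_torsion_free'
  let b₀ := Module.Free.chooseBasis O x
  let b' := b₀.reindex (Fintype.equivFin _)
  set n := Fintype.card (Module.Free.ChooseBasisIndex O ↥x)
  let v : Fin n → V := fun i => (b' i : V)
  have hli : LinearIndependent O v := b'.linearIndependent.map' x.subtype x.ker_subtype
  have hliF : LinearIndependent F v := (LinearIndependent.iff_fractionRing O F).mp hli
  have hspanO : Submodule.span O (Set.range v) = x := by
    have : Set.range v = x.subtype '' Set.range ⇑b' := by
      rw [← Set.range_comp]; rfl
    rw [this, Submodule.span_image, b'.span_eq, Submodule.map_top, Submodule.range_subtype]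
  have hspanF : ⊤ ≤ Submodule.span F (Set.range v) := by
    rw [← hspan]
    apply Submodule.span_le.mpr
    intro z hz
    have : z ∈ Submodule.span O (Set.range v) := hspanO.symm ▸ hz
    exact Submodule.span_le_restrictScalars O F (Set.range v) this
  refine ⟨n, Module.Basis.mk hliF hspanF, ?_⟩
  rw [Module.Basis.coe_mk]
  exact hspanO

variable (B : V →ₗ[F] V →ₗ[F] F)

lemma dualSubmodule_antitone {x y : Submodule O V} (h : x ≤ y) :
    BilinForm.dualSubmodule (R := O) B y ≤ BilinForm.dualSubmodule (R := O) B x :=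
  fun v hv z hz => hv z (h hz)

lemma dual_dual_eq (hnd : BilinForm.Nondegenerate B) (hsy : BilinForm.IsSymm B) (x : Submodule O V) (hfg : x.FG)
    (hspan : Submodule.span F (x : Set V) = ⊤) :
    BilinForm.dualSubmodule (R := O) B (BilinForm.dualSubmodule (R := O) B x) = x := by
  obtain ⟨n, b, hb⟩ := exists_basis_of_fg_full x hfg hspan
  rw [← hb]
  exact BilinForm.dualSubmodule_dualSubmodule_of_basis B hnd hsy b

lemma dual_fg_full (hnd : BilinForm.Nondegenerate B) (x : Submodule O V) (hfg : x.FG)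
    (hspan : Submodule.span F (x : Set V) = ⊤) :
    (BilinForm.dualSubmodule (R := O) B x).FG ∧
      Submodule.span F ((BilinForm.dualSubmodule (R := O) B x) : Set V) = ⊤ := by
  classical
  obtain ⟨n, b, hb⟩ := exists_basis_of_fg_full x hfg hspan
  rw [← hb, BilinForm.dualSubmodule_span_of_basis B hnd b]
  constructor
  · exact Submodule.fg_span (Set.finite_range _)
  · rw [eq_top_iff, ← (BilinForm.dualBasis B hnd b).span_eq]
    apply Submodule.span_le.mpr
    intro z hz
    exact Submodule.subset_span (Submodule.subset_span hz)

lemma fg_of_le_fg {x y : Submodule O V} (h : x ≤ y) (hy : y.FG) : x.FG := by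
  haveI : IsNoetherian O y := isNoetherian_of_fg_of_noetherian y hy
  have h1 : (Submodule.comap y.subtype x).FG := IsNoetherian.noetherian _
  have h2 : Submodule.map y.subtype (Submodule.comap y.subtype x) = x := by
    rw [Submodule.map_comap_subtype, inf_eq_right.mpr h]
  exact h2 ▸ h1.map _

end Dual

/-- Length of a module, as the Krull dimension of its lattice of submodules. -/
noncomputable def moduleLength (R M : Type*) [Ring R] [AddCommGroup M] [Module R M] :
    WithBot ℕ∞ :=
  Order.krullDim (Submodule R M)

/-- For full `O`-lattices `L ⊆ M` in a vector space with a nondegenerate symmetric bilinear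
form, with `M ⊆ M∨ ⊆ L∨`, one has `2·length(M/L) = length(L∨/L) − length(M∨/M)`, i.e.
`length(L∨/L) = 2·length(M/L) + length(M∨/M)`. -/
theorem two_mul_length_eq_length_dual_sub
    {O F V : Type*} [CommRing O] [IsDomain O] [IsDiscreteValuationRing O]
    [Field F] [Algebra O F] [IsFractionRing O F]
    [AddCommGroup V] [Module F V] [FiniteDimensional F V]
    [Module O V] [IsScalarTower O F V]
    (B : V →ₗ[F] V →ₗ[F] F)
    (hsymm : ∀ x y, B x y = B y x)
    (hnondeg : ∀ x, (∀ y, B x y = 0) → x = 0)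
    (L M Ld Md : Submodule O V)
    (hLfull : L.FG ∧ Submodule.span F (L : Set V) = ⊤)
    (hMfull : M.FG ∧ Submodule.span F (M : Set V) = ⊤)
    (hLd : ∀ v : V, v ∈ Ld ↔ ∀ x ∈ L, B v x ∈ Set.range (algebraMap O F))
    (hMd : ∀ v : V, v ∈ Md ↔ ∀ x ∈ M, B v x ∈ Set.range (algebraMap O F))
    (hLM : L ≤ M) (hMMd : M ≤ Md) (hMdLd : Md ≤ Ld) :
    moduleLength O (↥Ld ⧸ (L.comap Ld.subtype)) =
      2 • moduleLength O (↥M ⧸ (L.comap M.subtype)) +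
        moduleLength O (↥Md ⧸ (M.comap Md.subtype)) := by
  classical
  have hLMd : L ≤ Md := hLM.trans hMMd
  have hLLd : L ≤ Ld := hLMd.trans hMdLd
  have hMLd : M ≤ Ld := hMMd.trans hMdLd
  have hnd : BilinForm.Nondegenerate B :=
    ⟨hnondeg, fun y hy => hnondeg y (fun x => by rw [hsymm]; exact hy x)⟩
  have hsy : BilinForm.IsSymm B := BilinForm.isSymm_def.mpr fun x y => hsymm x y
  set D : Submodule O V → Submodule O V := fun x => BilinForm.dualSubmodule (R := O) B x with hD
  have hLd' : Ld = D L := by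
    ext v
    rw [hLd v]
    constructor
    · intro h
      refine (BilinForm.mem_dualSubmodule B).mpr fun y hy => ?_
      obtain ⟨r, hr⟩ := h y hy
      exact Submodule.mem_one.mpr ⟨r, hr⟩
    · intro h y hy
      obtain ⟨r, hr⟩ := Submodule.mem_one.mp ((BilinForm.mem_dualSubmodule B).mp h y hy)
      exact ⟨r, hr⟩
  have hMd' : Md = D M := by
    ext v
    rw [hMd v]
    constructor
    · intro h
      refine (BilinForm.mem_dualSubmodule B).mpr fun y hy => ?_
      obtain ⟨r, hr⟩ := h y hy
      exact Submodule.mem_one.mpr ⟨r, hr⟩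
    · intro h y hy
      obtain ⟨r, hr⟩ := Submodule.mem_one.mp ((BilinForm.mem_dualSubmodule B).mp h y hy)
      exact ⟨r, hr⟩
  have hLdFG : Ld.FG := by
    rw [hLd']; exact (dual_fg_full B hnd L hLfull.1 hLfull.2).1
  have hfull : ∀ x : Submodule O V, L ≤ x → Submodule.span F (x : Set V) = ⊤ := by
    intro x hx
    rw [eq_top_iff, ← hLfull.2]
    exact Submodule.span_mono hx
  have hfg : ∀ x : Submodule O V, x ≤ Ld → x.FG := fun x hx => fg_of_le_fg hx hLdFG
  have hDD : ∀ x : Submodule O V, L ≤ x → x ≤ Ld → D (D x) = x := fun x h1 h2 =>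
    dual_dual_eq B hnd hsy x (hfg x h2) (hfull x h1)
  have hanti : ∀ {x y : Submodule O V}, x ≤ y → D y ≤ D x := fun h =>
    dualSubmodule_antitone B h
  have e : (Set.Icc L M) ≃o (Set.Icc Md Ld)ᵒᵈ := by
    refine
      { toFun := fun x => OrderDual.toDual ⟨D x.1, ?_, ?_⟩
        invFun := fun y => ⟨D (OrderDual.ofDual y).1, ?_, ?_⟩
        left_inv := ?_, right_inv := ?_, map_rel_iff' := ?_ }
    · rw [hMd']; exact hanti x.2.2
    · rw [hLd']; exact hanti x.2.1
    · have h1 : D Ld ≤ D (OrderDual.ofDual y).1 := hanti (OrderDual.ofDual y).2.2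
      have h2 : D Ld = L := by rw [hLd']; exact hDD L le_rfl hLLd
      rw [h2] at h1
      exact h1
    · have h1 : D (OrderDual.ofDual y).1 ≤ D Md := hanti (OrderDual.ofDual y).2.1
      have h2 : D Md = M := by rw [hMd']; exact hDD M hLM hMLd
      rw [h2] at h1
      exact h1
    · intro x
      exact Subtype.ext (hDD x.1 x.2.1 (x.2.2.trans hMLd))
    · intro y
      exact Subtype.ext (hDD (OrderDual.ofDual y).1 (hLMd.trans (OrderDual.ofDual y).2.1)
        (OrderDual.ofDual y).2.2)
    · intro x y
      constructor
      · intro h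
        have h' : D y.1 ≤ D x.1 := h
        have h2 : D (D x.1) ≤ D (D y.1) := hanti h'
        rw [hDD x.1 x.2.1 (x.2.2.trans hMLd), hDD y.1 y.2.1 (y.2.2.trans hMLd)] at h2
        exact h2
      · intro h
        exact (hanti (Subtype.coe_le_coe.mpr h) : D y.1 ≤ D x.1)
  have key : Order.krullDim (Set.Icc Md Ld) = Order.krullDim (Set.Icc L M) := by
    rw [← Order.krullDim_orderDual (α := Set.Icc Md Ld)]
    exact (Order.krullDim_eq_of_orderIso e).symm
  have T1 : moduleLength O (↥Ld ⧸ (L.comap Ld.subtype)) = Order.krullDim (Set.Icc L Ld) :=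
    moduleLength_quot_eq_krullDim_Icc L Ld hLLd
  have T2 : moduleLength O (↥M ⧸ (L.comap M.subtype)) = Order.krullDim (Set.Icc L M) :=
    moduleLength_quot_eq_krullDim_Icc L M hLM
  have T3 : moduleLength O (↥Md ⧸ (M.comap Md.subtype)) = Order.krullDim (Set.Icc M Md) :=
    moduleLength_quot_eq_krullDim_Icc M Md hMMd
  rw [T1, T2, T3, krullDim_Icc_add hLMd hMdLd, krullDim_Icc_add hLM hMMd, key, two_nsmul,
    add_assoc, add_comm (Order.krullDim (Set.Icc M Md)) (Order.krullDim (Set.Icc L M)),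
    ← add_assoc]
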